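/- For every graph G of order n, |μₙ(G)| + |μₙ(Ḡ)| ≤ (√3/2)·n, where μₙ denotes the smallest adjacency eigenvalue. -/

import Mathlib

open Matrix SimpleGraph

/-- The eigenvalues of the adjacency matrix of `G`, in descending order:
`graphEig G i` is the `(i+1)`-th largest eigenvalue. -/
noncomputable def graphEig {n : ℕ} (G : SimpleGraph (Fin n)) (i : Fin n) : ℝ :=
  letI := Classical.decRel G.Adj
  letI hH : (G.adjMatrix ℝ).IsHermitian := by rw [Matrix.IsHermitian, conjTranspose_eq_transpose_of_trivial]; exact G.isSymm_adjMatrix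
  hH.eigenvalues (Tuple.sort hH.eigenvalues i.rev)

lemma comb_aux {n : ℕ} (Adj1 Adj2 : Fin n → Fin n → Prop)
    [DecidableRel Adj1] [DecidableRel Adj2]
    (h1 : Symmetric Adj1) (h2 : Symmetric Adj2)
    (hd : ∀ i j, Adj1 i j → Adj2 i j → False) (x y : Fin n → ℝ) :
    ((Finset.univ.filter
        (fun p : Fin n × Fin n => Adj1 p.1 p.2 ∧ 0 ≤ x p.1 ∧ x p.2 < 0)).card : ℝ)
    + ((Finset.univ.filter
        (fun p : Fin n × Fin n => Adj2 p.1 p.2 ∧ 0 ≤ y p.1 ∧ y p.2 < 0)).card : ℝ)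
    ≤ 3 * n ^ 2 / 8 := by
  classical
  set f : Fin n → Bool × Bool := fun i => (decide (0 ≤ x i), decide (0 ≤ y i)) with hf
  -- cardinalities as double sums
  have hcard : ∀ (c : Fin n × Fin n → Prop) (_ : DecidablePred c),
      ((Finset.univ.filter c).card : ℝ) = ∑ i : Fin n, ∑ j : Fin n, (if c (i, j) then (1:ℝ) else 0) := by
    intro c hc
    rw [Finset.card_filter]
    push_cast
    rw [← Finset.univ_product_univ, Finset.sum_product]
  rw [hcard (fun p : Fin n × Fin n => Adj1 p.1 p.2 ∧ 0 ≤ x p.1 ∧ x p.2 < 0) inferInstance,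
    hcard (fun p : Fin n × Fin n => Adj2 p.1 p.2 ∧ 0 ≤ y p.1 ∧ y p.2 < 0) inferInstance]
  -- pointwise bound
  have hpt : ∀ i j : Fin n,
      ((if Adj1 i j ∧ 0 ≤ x i ∧ x j < 0 then (1:ℝ) else 0)
        + (if Adj1 j i ∧ 0 ≤ x j ∧ x i < 0 then (1:ℝ) else 0))
      + ((if Adj2 i j ∧ 0 ≤ y i ∧ y j < 0 then (1:ℝ) else 0)
        + (if Adj2 j i ∧ 0 ≤ y j ∧ y i < 0 then (1:ℝ) else 0))
      ≤ (if f i = f j then 0 else 1) := by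
    intro i j
    by_cases hfe : f i = f j
    · have hx' : (0 ≤ x i ↔ 0 ≤ x j) ∧ (0 ≤ y i ↔ 0 ≤ y j) := by
        simpa [hf, Prod.ext_iff, decide_eq_decide] using hfe
      rw [if_pos hfe,
        if_neg (fun h => absurd (hx'.1.mp h.2.1) (not_le.mpr h.2.2)),
        if_neg (fun h => absurd (hx'.1.mpr h.2.1) (not_le.mpr h.2.2)),
        if_neg (fun h => absurd (hx'.2.mp h.2.1) (not_le.mpr h.2.2)),
        if_neg (fun h => absurd (hx'.2.mpr h.2.1) (not_le.mpr h.2.2))]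
      norm_num
    · rw [if_neg hfe]
      have e12 : ¬((Adj1 i j ∧ 0 ≤ x i ∧ x j < 0) ∧ (Adj1 j i ∧ 0 ≤ x j ∧ x i < 0)) := by
        rintro ⟨⟨-, h, -⟩, ⟨-, -, h'⟩⟩; exact absurd h (not_le.mpr h')
      have e34 : ¬((Adj2 i j ∧ 0 ≤ y i ∧ y j < 0) ∧ (Adj2 j i ∧ 0 ≤ y j ∧ y i < 0)) := by
        rintro ⟨⟨-, h, -⟩, ⟨-, -, h'⟩⟩; exact absurd h (not_le.mpr h')
      have e13 : ¬(Adj1 i j ∧ Adj2 i j) := fun ⟨a, b⟩ => hd i j a b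
      have e14 : ¬(Adj1 i j ∧ Adj2 j i) := fun ⟨a, b⟩ => hd i j a (h2 b)
      have e23 : ¬(Adj1 j i ∧ Adj2 i j) := fun ⟨a, b⟩ => hd j i a (h2 b)
      have e24 : ¬(Adj1 j i ∧ Adj2 j i) := fun ⟨a, b⟩ => hd j i a b
      by_cases p1 : Adj1 i j ∧ 0 ≤ x i ∧ x j < 0
      · rw [if_pos p1, if_neg (fun p2 => e12 ⟨p1, p2⟩),
          if_neg (fun p3 => e13 ⟨p1.1, p3.1⟩), if_neg (fun p4 => e14 ⟨p1.1, p4.1⟩)]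
        norm_num
      · rw [if_neg p1]
        by_cases p2 : Adj1 j i ∧ 0 ≤ x j ∧ x i < 0
        · rw [if_pos p2, if_neg (fun p3 => e23 ⟨p2.1, p3.1⟩),
            if_neg (fun p4 => e24 ⟨p2.1, p4.1⟩)]
          norm_num
        · rw [if_neg p2]
          by_cases p3 : Adj2 i j ∧ 0 ≤ y i ∧ y j < 0
          · rw [if_pos p3, if_neg (fun p4 => e34 ⟨p3, p4⟩)]
            norm_num
          · rw [if_neg p3]
            split_ifs <;> norm_num
  -- sum the pointwise bound after symmetrization
  have hsymm1 : (∑ i : Fin n, ∑ j : Fin n, (if Adj1 i j ∧ 0 ≤ x i ∧ x j < 0 then (1:ℝ) else 0))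
      = ∑ i : Fin n, ∑ j : Fin n, (if Adj1 j i ∧ 0 ≤ x j ∧ x i < 0 then (1:ℝ) else 0) :=
    Finset.sum_comm
  have hsymm2 : (∑ i : Fin n, ∑ j : Fin n, (if Adj2 i j ∧ 0 ≤ y i ∧ y j < 0 then (1:ℝ) else 0))
      = ∑ i : Fin n, ∑ j : Fin n, (if Adj2 j i ∧ 0 ≤ y j ∧ y i < 0 then (1:ℝ) else 0) :=
    Finset.sum_comm
  -- count same-class pairs
  set m : Bool × Bool → ℝ := fun c => ∑ i : Fin n, (if f i = c then (1:ℝ) else 0) with hm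
  have hs : ∑ c : Bool × Bool, m c = n := by
    rw [hm, Finset.sum_comm]
    simp [Finset.sum_ite_eq]
  have hkey : ∑ c : Bool × Bool, m c ^ 2
      = ∑ i : Fin n, ∑ j : Fin n, (if f i = f j then (1:ℝ) else 0) := by
    have step : ∀ i j : Fin n, (∑ c : Bool × Bool,
        (if f i = c then (1:ℝ) else 0) * (if f j = c then (1:ℝ) else 0))
        = (if f i = f j then (1:ℝ) else 0) := by
      intro i j
      rw [Finset.sum_eq_single (f i)]
      · by_cases hij : f i = f j
        · simp [hij]
        · rw [if_pos rfl, if_neg (fun h => hij h.symm), if_neg hij, one_mul]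
      · intro c _ hc
        rw [if_neg (fun h => hc h.symm), zero_mul]
      · simp
    calc ∑ c : Bool × Bool, m c ^ 2
        = ∑ c : Bool × Bool, ∑ i : Fin n, ∑ j : Fin n,
            (if f i = c then (1:ℝ) else 0) * (if f j = c then (1:ℝ) else 0) := by
          refine Finset.sum_congr rfl (fun c _ => ?_)
          rw [sq, hm, Finset.sum_mul_sum]
      _ = ∑ i : Fin n, ∑ c : Bool × Bool, ∑ j : Fin n,
            (if f i = c then (1:ℝ) else 0) * (if f j = c then (1:ℝ) else 0) := Finset.sum_comm
      _ = ∑ i : Fin n, ∑ j : Fin n, ∑ c : Bool × Bool,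
            (if f i = c then (1:ℝ) else 0) * (if f j = c then (1:ℝ) else 0) :=
          Finset.sum_congr rfl (fun i _ => Finset.sum_comm)
      _ = ∑ i : Fin n, ∑ j : Fin n, (if f i = f j then (1:ℝ) else 0) :=
          Finset.sum_congr rfl (fun i _ => Finset.sum_congr rfl (fun j _ => step i j))
  have hcheb : (n:ℝ) ^ 2 ≤ 4 * ∑ c : Bool × Bool, m c ^ 2 := by
    have h := sq_sum_le_card_mul_sum_sq (s := (Finset.univ : Finset (Bool × Bool))) (f := m)
    rw [hs] at h
    simpa using h
  have hdiag : ∑ i : Fin n, ∑ j : Fin n,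
      ((if f i = f j then (0:ℝ) else 1) + (if f i = f j then (1:ℝ) else 0)) = (n:ℝ) ^ 2 := by
    have : ∀ i j : Fin n,
        ((if f i = f j then (0:ℝ) else 1) + (if f i = f j then (1:ℝ) else 0)) = 1 := by
      intro i j; split_ifs <;> norm_num
    rw [Finset.sum_congr rfl (fun i _ => Finset.sum_congr rfl (fun j _ => this i j))]
    simp [sq]
  have hsplit : ∑ i : Fin n, ∑ j : Fin n, (if f i = f j then (0:ℝ) else 1)
      ≤ 3 * (n:ℝ) ^ 2 / 4 := by
    have expand : ∑ i : Fin n, ∑ j : Fin n,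
        ((if f i = f j then (0:ℝ) else 1) + (if f i = f j then (1:ℝ) else 0))
        = (∑ i : Fin n, ∑ j : Fin n, (if f i = f j then (0:ℝ) else 1))
          + ∑ i : Fin n, ∑ j : Fin n, (if f i = f j then (1:ℝ) else 0) := by
      simp [Finset.sum_add_distrib]
    rw [expand] at hdiag
    linarith [hcheb, hkey ▸ hcheb]
  -- assemble
  have hquad : 2 * ((∑ i : Fin n, ∑ j : Fin n,
        (if Adj1 i j ∧ 0 ≤ x i ∧ x j < 0 then (1:ℝ) else 0))
      + ∑ i : Fin n, ∑ j : Fin n, (if Adj2 i j ∧ 0 ≤ y i ∧ y j < 0 then (1:ℝ) else 0))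
      ≤ ∑ i : Fin n, ∑ j : Fin n, (if f i = f j then (0:ℝ) else 1) := by
    have merge : ∑ i : Fin n, ∑ j : Fin n,
        (((if Adj1 i j ∧ 0 ≤ x i ∧ x j < 0 then (1:ℝ) else 0)
          + (if Adj1 j i ∧ 0 ≤ x j ∧ x i < 0 then (1:ℝ) else 0))
        + ((if Adj2 i j ∧ 0 ≤ y i ∧ y j < 0 then (1:ℝ) else 0)
          + (if Adj2 j i ∧ 0 ≤ y j ∧ y i < 0 then (1:ℝ) else 0)))
        = (∑ i : Fin n, ∑ j : Fin n, (if Adj1 i j ∧ 0 ≤ x i ∧ x j < 0 then (1:ℝ) else 0))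
        + (∑ i : Fin n, ∑ j : Fin n, (if Adj1 j i ∧ 0 ≤ x j ∧ x i < 0 then (1:ℝ) else 0))
        + ((∑ i : Fin n, ∑ j : Fin n, (if Adj2 i j ∧ 0 ≤ y i ∧ y j < 0 then (1:ℝ) else 0))
        + ∑ i : Fin n, ∑ j : Fin n, (if Adj2 j i ∧ 0 ≤ y j ∧ y i < 0 then (1:ℝ) else 0)) := by
      simp [Finset.sum_add_distrib]
    have hb : ∑ i : Fin n, ∑ j : Fin n,
        (((if Adj1 i j ∧ 0 ≤ x i ∧ x j < 0 then (1:ℝ) else 0)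
          + (if Adj1 j i ∧ 0 ≤ x j ∧ x i < 0 then (1:ℝ) else 0))
        + ((if Adj2 i j ∧ 0 ≤ y i ∧ y j < 0 then (1:ℝ) else 0)
          + (if Adj2 j i ∧ 0 ≤ y j ∧ y i < 0 then (1:ℝ) else 0)))
        ≤ ∑ i : Fin n, ∑ j : Fin n, (if f i = f j then (0:ℝ) else 1) :=
      Finset.sum_le_sum (fun i _ => Finset.sum_le_sum (fun j _ => hpt i j))
    rw [merge] at hb
    linarith [hsymm1, hsymm2, hb]
  linarith [hquad, hsplit]

lemma quad_bound {n : ℕ} (Adj : Fin n → Fin n → Prop) [DecidableRel Adj]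
    (hsym : Symmetric Adj) (x : Fin n → ℝ) (hx : ∑ i, x i ^ 2 = 1)
    (μ : ℝ) (hμ : μ = ∑ i : Fin n, ∑ j : Fin n, (if Adj i j then x i * x j else 0))
    (hμ0 : μ ≤ 0) :
    μ ^ 2 ≤ ((Finset.univ.filter
        (fun p : Fin n × Fin n => Adj p.1 p.2 ∧ 0 ≤ x p.1 ∧ x p.2 < 0)).card : ℝ) := by
  classical
  set T := Finset.univ.filter
      (fun p : Fin n × Fin n => Adj p.1 p.2 ∧ 0 ≤ x p.1 ∧ x p.2 < 0) with hT
  set xp : Fin n → ℝ := fun i => max (x i) 0 with hxp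
  set xm : Fin n → ℝ := fun i => max (-x i) 0 with hxm
  have hxpn : ∀ i, 0 ≤ xp i := fun i => le_max_right _ _
  have hxmn : ∀ i, 0 ≤ xm i := fun i => le_max_right _ _
  have hsq : ∀ i, xp i ^ 2 + xm i ^ 2 = x i ^ 2 := by
    intro i
    rcases le_or_gt 0 (x i) with h | h
    · simp only [hxp, hxm]; simp only [max_eq_left h, max_eq_right (by linarith : -x i ≤ 0)]; ring
    · simp only [hxp, hxm]; simp only [max_eq_right h.le, max_eq_left (by linarith : 0 ≤ -x i)]; ring
  set Sp := ∑ i, xp i ^ 2 with hSp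
  set Sm := ∑ i, xm i ^ 2 with hSm
  have hSsum : Sp + Sm = 1 := by
    rw [hSp, hSm, ← Finset.sum_add_distrib, ← hx]
    exact Finset.sum_congr rfl (fun i _ => hsq i)
  have hSpn : 0 ≤ Sp := Finset.sum_nonneg (fun i _ => sq_nonneg _)
  have hSmn : 0 ≤ Sm := Finset.sum_nonneg (fun i _ => sq_nonneg _)
  set W := ∑ p ∈ T, xp p.1 * xm p.2 with hW
  have hWn : 0 ≤ W := Finset.sum_nonneg (fun p _ => mul_nonneg (hxpn _) (hxmn _))
  -- step 1 : -μ ≤ 2 * W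
  have hdecomp : ∀ i, xp i - xm i = x i := by
    intro i
    simp only [hxp, hxm]
    rcases le_or_gt 0 (x i) with h | h
    · rw [max_eq_left h, max_eq_right (neg_nonpos.mpr h)]; ring
    · rw [max_eq_right h.le, max_eq_left (neg_nonneg.mpr h.le)]; ring
  have hW' : (∑ i : Fin n, ∑ j : Fin n, (if Adj i j then xp i * xm j else 0)) = W := by
    rw [hW, hT, Finset.sum_filter, ← Finset.univ_product_univ, Finset.sum_product]
    refine Finset.sum_congr rfl (fun i _ => Finset.sum_congr rfl (fun j _ => ?_))
    by_cases ha : Adj i j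
    · by_cases h1 : 0 ≤ x i
      · by_cases h2 : x j < 0
        · rw [if_pos ha, if_pos ⟨ha, h1, h2⟩]
        · rw [if_pos ha, if_neg (fun h => h2 h.2.2)]
          have : xm j = 0 := by
            simp only [hxm]; exact max_eq_right (by push_neg at h2; linarith)
          rw [this, mul_zero]
      · rw [if_pos ha, if_neg (fun h => h1 h.2.1)]
        have : xp i = 0 := by
          simp only [hxp]; exact max_eq_right (by push_neg at h1; linarith)
        rw [this, zero_mul]
    · rw [if_neg ha, if_neg (fun h => ha h.1)]
  have step1 : -μ ≤ 2 * W := by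
    have hpt : ∀ i j : Fin n, -(if Adj i j then x i * x j else 0)
        ≤ (if Adj i j then xp i * xm j else 0) + (if Adj i j then xm i * xp j else 0) := by
      intro i j
      by_cases ha : Adj i j
      · rw [if_pos ha, if_pos ha, if_pos ha, ← hdecomp i, ← hdecomp j]
        nlinarith [mul_nonneg (hxpn i) (hxpn j), mul_nonneg (hxmn i) (hxmn j)]
      · simp [ha]
    have h1 : -μ ≤ ∑ i : Fin n, ∑ j : Fin n,
        ((if Adj i j then xp i * xm j else 0) + (if Adj i j then xm i * xp j else 0)) := by
      have : -μ = ∑ i : Fin n, ∑ j : Fin n, -(if Adj i j then x i * x j else 0) := by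
        rw [hμ]; simp
      rw [this]
      exact Finset.sum_le_sum (fun i _ => Finset.sum_le_sum (fun j _ => hpt i j))
    have hswap : (∑ i : Fin n, ∑ j : Fin n, (if Adj i j then xm i * xp j else 0))
        = ∑ i : Fin n, ∑ j : Fin n, (if Adj i j then xp i * xm j else 0) := by
      rw [Finset.sum_comm]
      refine Finset.sum_congr rfl (fun i _ => Finset.sum_congr rfl (fun j _ => ?_))
      by_cases h : Adj i j
      · rw [if_pos h, if_pos (hsym h), mul_comm]
      · rw [if_neg h, if_neg (fun h' => h (hsym h'))]
    have h2 : (∑ i : Fin n, ∑ j : Fin n,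
        ((if Adj i j then xp i * xm j else 0) + (if Adj i j then xm i * xp j else 0)))
        = 2 * W := by
      rw [Finset.sum_congr rfl
        (fun i _ => Finset.sum_add_distrib (s := (Finset.univ : Finset (Fin n))))]
      rw [Finset.sum_add_distrib, hswap, hW']
      ring
    linarith [h1, h2 ▸ h1]
  -- step 2 : Cauchy-Schwarz
  have step2 : W ^ 2 ≤ (T.card : ℝ) * (Sp * Sm) := by
    have h1 : W ^ 2 ≤ (T.card : ℝ) * ∑ p ∈ T, (xp p.1 * xm p.2) ^ 2 :=
      sq_sum_le_card_mul_sum_sq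
    have h2 : ∑ p ∈ T, (xp p.1 * xm p.2) ^ 2 ≤ Sp * Sm := by
      have : Sp * Sm = ∑ p ∈ Finset.univ ×ˢ Finset.univ, (xp p.1 * xm p.2) ^ 2 := by
        rw [hSp, hSm, Finset.sum_mul_sum, Finset.sum_product]
        exact Finset.sum_congr rfl (fun i _ => Finset.sum_congr rfl (fun j _ => by ring))
      rw [this]
      refine Finset.sum_le_sum_of_subset_of_nonneg ?_ (fun p _ _ => sq_nonneg _)
      rw [Finset.univ_product_univ, hT]
      exact Finset.filter_subset _ _
    calc W ^ 2 ≤ (T.card : ℝ) * ∑ p ∈ T, (xp p.1 * xm p.2) ^ 2 := h1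
      _ ≤ (T.card : ℝ) * (Sp * Sm) := by
          exact mul_le_mul_of_nonneg_left h2 (by positivity)
  have hTn : (0:ℝ) ≤ (T.card : ℝ) := by positivity
  have h4 : μ ^ 2 ≤ 4 * W ^ 2 := by
    nlinarith [mul_nonneg (by linarith : (0:ℝ) ≤ 2 * W + μ) (by linarith : (0:ℝ) ≤ -μ),
      mul_nonneg (by linarith : (0:ℝ) ≤ 2 * W + μ) hWn]
  have h5 : Sp * Sm ≤ 1 / 4 := by nlinarith [sq_nonneg (Sp - Sm)]
  nlinarith [step2, h4, mul_nonneg hTn (by linarith : (0:ℝ) ≤ 1 / 4 - Sp * Sm)]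

lemma graphEig_min {n : ℕ} (hn : 0 < n) (h : n - 1 < n) (G : SimpleGraph (Fin n)) :
    ∃ x : Fin n → ℝ, (∑ i, x i ^ 2 = 1) ∧
      graphEig G ⟨n - 1, h⟩ = (∑ i : Fin n, ∑ j : Fin n,
        @ite ℝ (G.Adj i j) (Classical.decRel G.Adj i j) (x i * x j) 0) ∧
      graphEig G ⟨n - 1, h⟩ ≤ 0 := by
  letI := Classical.decRel G.Adj
  have hH : (@SimpleGraph.adjMatrix ℝ (Fin n) G (Classical.decRel G.Adj) _ _).IsHermitian := by
    rw [Matrix.IsHermitian, conjTranspose_eq_transpose_of_trivial]; exact G.isSymm_adjMatrix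
  have hkey : ∀ i : Fin n, graphEig G i = hH.eigenvalues (Tuple.sort hH.eigenvalues i.rev) :=
    fun _ => rfl
  have hrev : ((⟨n - 1, h⟩ : Fin n)).rev = ⟨0, hn⟩ := by
    ext
    simp only [Fin.val_rev]
    omega
  set σ := Tuple.sort hH.eigenvalues with hσ
  set i₀ := σ ⟨0, hn⟩ with hi₀
  have hμ : graphEig G ⟨n - 1, h⟩ = hH.eigenvalues i₀ := by
    rw [hkey, hrev]
  -- minimality
  have hmin : ∀ j, hH.eigenvalues i₀ ≤ hH.eigenvalues j := by
    intro j
    have h := Tuple.monotone_sort hH.eigenvalues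
      (show (⟨0, hn⟩ : Fin n) ≤ σ.symm j from by simp [Fin.le_def])
    simpa [hσ, Function.comp] using h
  -- trace is zero
  have htr : ∑ j, hH.eigenvalues j = 0 := by
    have t1 : (@SimpleGraph.adjMatrix ℝ (Fin n) G (Classical.decRel G.Adj) _ _).trace = 0 :=
      G.trace_adjMatrix ℝ
    have t2 : (@SimpleGraph.adjMatrix ℝ (Fin n) G (Classical.decRel G.Adj) _ _).trace
        = ∑ j, hH.eigenvalues j := by
      rw [hH.trace_eq_sum_eigenvalues]
      simp
    rw [← t2, t1]
  have hle0 : hH.eigenvalues i₀ ≤ 0 := by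
    have h1 : (n : ℝ) * hH.eigenvalues i₀ ≤ ∑ j, hH.eigenvalues j := by
      calc (n : ℝ) * hH.eigenvalues i₀ = ∑ _j : Fin n, hH.eigenvalues i₀ := by
            simp [Finset.sum_const, Finset.card_univ, mul_comm]
        _ ≤ ∑ j, hH.eigenvalues j := Finset.sum_le_sum (fun j _ => hmin j)
    rw [htr] at h1
    have hn' : (0 : ℝ) < n := by exact_mod_cast hn
    nlinarith
  -- eigenvector
  set x : Fin n → ℝ := ⇑(hH.eigenvectorBasis i₀) with hx
  have hnorm : ∑ i, x i ^ 2 = 1 := by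
    have h1 : ‖hH.eigenvectorBasis i₀‖ = 1 := hH.eigenvectorBasis.orthonormal.1 i₀
    have h2 := EuclideanSpace.norm_eq (hH.eigenvectorBasis i₀)
    rw [h1] at h2
    have h3 : ∑ i, ‖hH.eigenvectorBasis i₀ i‖ ^ 2 = 1 :=
      Real.sqrt_eq_one.mp h2.symm
    rw [← h3]
    exact Finset.sum_congr rfl (fun i _ => by rw [Real.norm_eq_abs, sq_abs])
  have hAv : (@SimpleGraph.adjMatrix ℝ (Fin n) G (Classical.decRel G.Adj) _ _) *ᵥ x
      = hH.eigenvalues i₀ • x := hH.mulVec_eigenvectorBasis i₀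
  have hform : hH.eigenvalues i₀ = ∑ i : Fin n, ∑ j : Fin n,
      @ite ℝ (G.Adj i j) (Classical.decRel G.Adj i j) (x i * x j) 0 := by
    have e1 : ∑ i, x i * ((@SimpleGraph.adjMatrix ℝ (Fin n) G (Classical.decRel G.Adj) _ _) *ᵥ x) i
        = hH.eigenvalues i₀ := by
      rw [hAv]
      simp only [Pi.smul_apply, smul_eq_mul]
      calc ∑ i, x i * (hH.eigenvalues i₀ * x i)
          = hH.eigenvalues i₀ * ∑ i, x i ^ 2 := by
            rw [Finset.mul_sum]
            exact Finset.sum_congr rfl (fun i _ => by ring)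
        _ = hH.eigenvalues i₀ := by rw [hnorm, mul_one]
    have e2 : ∑ i, x i * ((@SimpleGraph.adjMatrix ℝ (Fin n) G (Classical.decRel G.Adj) _ _) *ᵥ x) i
        = ∑ i : Fin n, ∑ j : Fin n,
          @ite ℝ (G.Adj i j) (Classical.decRel G.Adj i j) (x i * x j) 0 := by
      simp only [Matrix.mulVec, dotProduct, SimpleGraph.adjMatrix_apply, Finset.mul_sum]
      refine Finset.sum_congr rfl (fun i _ => Finset.sum_congr rfl (fun j _ => ?_))
      by_cases h : G.Adj i j
      · rw [if_pos h, if_pos h]; ring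
      · rw [if_neg h, if_neg h]; ring
    rw [← e1, e2]
  exact ⟨x, hnorm, by rw [hμ, hform], by rw [hμ]; exact hle0⟩

theorem stmt12 (n : ℕ) (hn : 0 < n) (G : SimpleGraph (Fin n)) :
    |graphEig G ⟨n - 1, by omega⟩| + |graphEig Gᶜ ⟨n - 1, by omega⟩| ≤
      Real.sqrt 3 / 2 * n := by
  have hgen : ∀ h : n - 1 < n,
      |graphEig G ⟨n - 1, h⟩| + |graphEig Gᶜ ⟨n - 1, h⟩| ≤ Real.sqrt 3 / 2 * n := by
    intro h
    obtain ⟨x, hx1, hx2, hx3⟩ := graphEig_min hn h G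
    obtain ⟨y, hy1, hy2, hy3⟩ := graphEig_min hn h Gᶜ
    have hq1 := @quad_bound n G.Adj (Classical.decRel G.Adj) (fun _ _ hadj => hadj.symm)
      x hx1 (graphEig G ⟨n - 1, h⟩) hx2 hx3
    have hq2 := @quad_bound n Gᶜ.Adj (Classical.decRel Gᶜ.Adj) (fun _ _ hadj => hadj.symm)
      y hy1 (graphEig Gᶜ ⟨n - 1, h⟩) hy2 hy3
    have hc := @comb_aux n G.Adj Gᶜ.Adj (Classical.decRel G.Adj) (Classical.decRel Gᶜ.Adj)
      (fun _ _ hadj => hadj.symm) (fun _ _ hadj => hadj.symm)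
      (fun i j h1 h2 => ((SimpleGraph.compl_adj G i j).mp h2).2 h1) x y
    rw [abs_of_nonpos hx3, abs_of_nonpos hy3]
    set μ := graphEig G ⟨n - 1, h⟩
    set ν := graphEig Gᶜ ⟨n - 1, h⟩
    have h3 : μ ^ 2 + ν ^ 2 ≤ 3 * (n : ℝ) ^ 2 / 8 := by linarith
    have hs3 : Real.sqrt 3 ^ 2 = 3 := Real.sq_sqrt (by norm_num)
    have hs3n : (0 : ℝ) ≤ Real.sqrt 3 := Real.sqrt_nonneg 3
    have hnn : (0 : ℝ) ≤ (n : ℝ) := Nat.cast_nonneg n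
    nlinarith [sq_nonneg (μ - ν), sq_nonneg (μ + ν + Real.sqrt 3 / 2 * n),
      mul_nonneg hs3n hnn, mul_nonneg (neg_nonneg.mpr hx3) (neg_nonneg.mpr hy3)]
  exact hgen (by omega)
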